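/- arXiv:2109.01738 — 12 statements merged into one kernel-verified Lean document; each statement's English description precedes it below -/
import Mathlib

section
/- The point p = (n/R₀)·(1, ωε, σωε/γ) is an equilibrium of the reduced SE(R)IRS system: the vector field F(S,E,I) = (−βS(I+αE)/n + ω(n−S−E−I), βS(I+αE)/n − (σ+δ)E, σE − γI) vanishes at p. -/
/-- The SE(R)IRS basic reproductive number. -/
noncomputable def R0 (β γ δ σ α : ℝ) : ℝ := β * (α * γ + σ) / (γ * (δ + σ))

/-- The quantity ε appearing in the endemic equilibrium. -/
noncomputable def eps (β γ δ σ ω α : ℝ) : ℝ :=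
  (β * (α * γ + σ) - γ * (δ + σ)) / ((δ + σ) * (σ * ω + γ * (δ + σ + ω)))

/-- The reduced SE(R)IRS vector field on (S, E, I). -/
noncomputable def serirsRedField (β γ δ σ ω α n : ℝ) (p : ℝ × ℝ × ℝ) : ℝ × ℝ × ℝ :=
  (-β * p.1 * (p.2.2 + α * p.2.1) / n + ω * (n - p.1 - p.2.1 - p.2.2),
   β * p.1 * (p.2.2 + α * p.2.1) / n - (σ + δ) * p.2.1,
   σ * p.2.1 - γ * p.2.2)

/-- The point p = (n/R₀)·(1, ωε, σωε/γ) is an equilibrium of the reduced SE(R)IRS system. -/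
theorem stmt_3 (β γ δ σ ω α n : ℝ)
    (hβ : 0 < β) (hγ : 0 < γ) (hσ : 0 < σ) (hω : 0 < ω) (hn : 0 < n)
    (hδ : 0 ≤ δ) (hα0 : 0 ≤ α) (hα1 : α ≤ 1) :
    serirsRedField β γ δ σ ω α n
      (n / R0 β γ δ σ α * 1,
       n / R0 β γ δ σ α * (ω * eps β γ δ σ ω α),
       n / R0 β γ δ σ α * (σ * ω * eps β γ δ σ ω α / γ)) = (0, 0, 0) := by
  have hδσ : 0 < δ + σ := by linarith
  have hnum : 0 < β * (α * γ + σ) := by positivity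
  have hden2 : 0 < σ * ω + γ * (δ + σ + ω) := by positivity
  simp only [serirsRedField, R0, eps, Prod.mk.injEq]
  refine ⟨?_, ?_, ?_⟩ <;> field_simp <;> ring
end

section
/- The matrix M = !![−εω(δ+σ)−ω, −αβ/R₀−ω, −β/R₀−ω; εω(δ+σ), −βσ/(γR₀), β/R₀; 0, σ, −γ] is singular (det M = 0) if and only if R₀ = 1. -/
open Matrix

/-- The Jacobian of the reduced SE(R)IRS vector field at the endemic equilibrium. -/
noncomputable def Mjac (β γ δ σ ω α : ℝ) : Matrix (Fin 3) (Fin 3) ℝ :=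
  !![-(eps β γ δ σ ω α) * ω * (δ + σ) - ω, -(α * β) / R0 β γ δ σ α - ω, -β / R0 β γ δ σ α - ω;
     eps β γ δ σ ω α * ω * (δ + σ), -(β * σ) / (γ * R0 β γ δ σ α), β / R0 β γ δ σ α;
     0, σ, -γ]

/-- M is singular if and only if R₀ = 1. -/
theorem stmt_7 (β γ δ σ ω α n : ℝ)
    (hβ : 0 < β) (hγ : 0 < γ) (hσ : 0 < σ) (hω : 0 < ω) (hn : 0 < n)
    (hδ : 0 ≤ δ) (hα0 : 0 ≤ α) (hα1 : α ≤ 1) :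
    (Mjac β γ δ σ ω α).det = 0 ↔ R0 β γ δ σ α = 1 := by
  have hds : 0 < δ + σ := by linarith
  have hag : 0 < α * γ + σ := by nlinarith
  have hD : 0 < σ * ω + γ * (δ + σ + ω) := by nlinarith
  have hR0 : R0 β γ δ σ α ≠ 0 := by
    unfold R0
    positivity
  have hdet : (Mjac β γ δ σ ω α).det = ω * (γ * (δ + σ) - β * (α * γ + σ)) := by
    rw [Mjac, det_fin_three]
    simp only [of_apply, cons_val', cons_val_zero, cons_val_one, cons_val_two, empty_val', cons_val_fin_one, head_cons, head_fin_const, tail_cons]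
    unfold eps R0
    field_simp
    ring
  rw [hdet]
  constructor
  · intro h
    unfold R0
    have : β * (α * γ + σ) = γ * (δ + σ) := by
      nlinarith
    rw [this]
    field_simp
  · intro h
    unfold R0 at h
    have : β * (α * γ + σ) = γ * (δ + σ) := by
      field_simp at h
      linarith
    rw [this]
    ring
end

section
/- If R₀ > 1, then the determinant of the bialternate-sum matrix G = !![−εω(δ+σ) − ω − βσ/(γR₀), β/R₀, β/R₀ + ω; σ, −εω(δ+σ) − ω − γ, −αβ/R₀ − ω; 0, εω(δ+σ), −βσ/(γR₀) − γ] is strictly negative. -/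
open Matrix

/-- The bialternate sum of M with itself. -/
noncomputable def Gbial (β γ δ σ ω α : ℝ) : Matrix (Fin 3) (Fin 3) ℝ :=
  !![-(eps β γ δ σ ω α) * ω * (δ + σ) - ω - β * σ / (γ * R0 β γ δ σ α),
       β / R0 β γ δ σ α, β / R0 β γ δ σ α + ω;
     σ, -(eps β γ δ σ ω α) * ω * (δ + σ) - ω - γ, -(α * β) / R0 β γ δ σ α - ω;
     0, eps β γ δ σ ω α * ω * (δ + σ), -(β * σ) / (γ * R0 β γ δ σ α) - γ]

lemma key (E ω k γ σ α : ℝ) (hE : 0 < E) (hω : 0 < ω) (hk : 0 < k) (hγ : 0 < γ)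
    (hσ : 0 < σ) (hα : 0 ≤ α) (hσle : σ ≤ σ * k + γ) :
    -(E + ω + σ * k) * ((E + ω + γ) * (σ * k + γ) + E * (α * γ * k + ω))
      + γ * k * σ * (σ * k + γ) + σ * E * (γ * k + ω) < 0 := by
  have hA : -(E + ω + σ * k) * ((E + ω + γ) * (σ * k + γ) + E * (α * γ * k + ω))
      + γ * k * σ * (σ * k + γ) + σ * E * (γ * k + ω)
      = -(((E - ω)^2 * (σ * k + γ)) + ((σ * k + γ - σ) * (E * ω))
          + (E * ((γ + σ * k)^2 - γ * (σ * k))) + (α * γ * k * E * (E + ω + σ * k))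
          + E^2 * ω + E * ω^2 + ω * (γ + σ * k)^2 + 4 * (E * ω * (σ * k))
          + 3 * (E * ω * γ)) := by ring
  rw [hA, neg_lt_zero]
  have t1 : 0 ≤ (E - ω)^2 * (σ * k + γ) := by positivity
  have t2 : 0 ≤ (σ * k + γ - σ) * (E * ω) :=
    mul_nonneg (by linarith) (mul_pos hE hω).le
  have t3 : 0 ≤ E * ((γ + σ * k)^2 - γ * (σ * k)) :=
    mul_nonneg hE.le (by nlinarith [sq_nonneg γ, sq_nonneg (σ * k), mul_pos hγ (mul_pos hσ hk)])
  have t4 : 0 ≤ α * γ * k * E * (E + ω + σ * k) := by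
    have : 0 < E + ω + σ * k := by positivity
    positivity
  have t5 : 0 < E^2 * ω := by positivity
  have t6 : 0 < E * ω^2 := by positivity
  have t7 : 0 < ω * (γ + σ * k)^2 := by positivity
  have t8 : 0 < E * ω * (σ * k) := by positivity
  have t9 : 0 < E * ω * γ := by positivity
  linarith

/-- If R₀ > 1 then the determinant of the bialternate-sum matrix G is strictly negative. -/
theorem stmt_8 (β γ δ σ ω α n : ℝ)
    (hβ : 0 < β) (hγ : 0 < γ) (hσ : 0 < σ) (hω : 0 < ω) (hn : 0 < n)
    (hδ : 0 ≤ δ) (hα0 : 0 ≤ α) (hα1 : α ≤ 1)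
    (hR0 : 1 < R0 β γ δ σ α) :
    (Gbial β γ δ σ ω α).det < 0 := by
  have hδσ : 0 < δ + σ := by linarith
  have hαγσ : 0 < α * γ + σ := by nlinarith
  have hden : 0 < σ * ω + γ * (δ + σ + ω) := by nlinarith
  have hnum : 0 < β * (α * γ + σ) - γ * (δ + σ) := by
    have := (one_lt_div (by positivity : (0:ℝ) < γ * (δ + σ))).mp hR0
    linarith
  set k : ℝ := (δ + σ) / (α * γ + σ) with hkdef
  set E : ℝ := eps β γ δ σ ω α * ω * (δ + σ) with hEdef
  have hk : 0 < k := by positivity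
  have hE : 0 < E := by
    have : 0 < eps β γ δ σ ω α := by unfold eps; positivity
    positivity
  have hne1 : α * γ + σ ≠ 0 := hαγσ.ne'
  have hne2 : γ ≠ 0 := hγ.ne'
  have hne3 : (δ + σ) ≠ 0 := hδσ.ne'
  have hne4 : β ≠ 0 := hβ.ne'
  have hG : Gbial β γ δ σ ω α =
      !![-E - ω - σ * k, γ * k, γ * k + ω;
         σ, -E - ω - γ, -(α * γ * k) - ω;
         0, E, -(σ * k) - γ] := by
    unfold Gbial
    ext i j
    fin_cases i <;> fin_cases j <;>
      simp [hEdef, hkdef, R0] <;> field_simp <;> ring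
  have hσle : σ ≤ σ * k + γ := by
    rw [hkdef, ← sub_nonneg]
    have h2 : σ * ((δ + σ) / (α * γ + σ)) + γ - σ
        = (σ * (δ + σ) + γ * (α * γ + σ) - σ * (α * γ + σ)) / (α * γ + σ) := by
      field_simp
    rw [h2]
    apply div_nonneg _ hαγσ.le
    nlinarith [mul_nonneg (mul_nonneg hσ.le hγ.le) (sub_nonneg.mpr hα1), mul_nonneg hα0 (sq_nonneg γ), mul_nonneg hσ.le hδ]
  have hkey := key E ω k γ σ α hE hω hk hγ hσ hα0 hσle
  rw [hG]
  simp [Matrix.det_fin_three]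
  nlinarith [hkey]
end

section
/- Lemma (stability of the endemic equilibrium): if R₀ > 1, then every complex eigenvalue of the matrix M = !![−εω(δ+σ)−ω, −αβ/R₀−ω, −β/R₀−ω; εω(δ+σ), −βσ/(γR₀), β/R₀; 0, σ, −γ] (viewed as a matrix over ℂ) has strictly negative real part. -/
open Matrix

set_option maxHeartbeats 1000000

lemma cubic_neg_re (a b c : ℝ) (ha : 0 < a) (hb : 0 < b) (hc : 0 < c)
    (habc : c < a * b) (μ : ℂ)
    (h : μ^3 + (a:ℂ)*μ^2 + (b:ℂ)*μ + (c:ℂ) = 0) : μ.re < 0 := by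
  obtain ⟨x, y⟩ := μ
  by_contra hx
  push_neg at hx
  simp only [Complex.le_def, Complex.zero_re] at hx
  have hre : ((⟨x,y⟩ : ℂ)^3 + (a:ℂ)*(⟨x,y⟩:ℂ)^2 + (b:ℂ)*(⟨x,y⟩:ℂ) + (c:ℂ)).re = 0 := by
    rw [h]; simp
  have him : ((⟨x,y⟩ : ℂ)^3 + (a:ℂ)*(⟨x,y⟩:ℂ)^2 + (b:ℂ)*(⟨x,y⟩:ℂ) + (c:ℂ)).im = 0 := by
    rw [h]; simp
  simp only [Complex.add_re, Complex.add_im, Complex.mul_re, Complex.mul_im,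
    Complex.ofReal_re, Complex.ofReal_im, pow_succ, pow_zero, one_mul,
    Complex.one_re, Complex.one_im] at hre him
  rcases eq_or_ne y 0 with hy | hy
  · rw [hy] at hre
    nlinarith [mul_nonneg (mul_nonneg hx hx) hx, mul_nonneg (mul_nonneg ha.le hx) hx,
      mul_nonneg hb.le hx]
  · have h5 : y * ((3*x^2 + 2*a*x + b) - y^2) = 0 := by linear_combination him
    have hy2 : y^2 = 3*x^2 + 2*a*x + b := by
      rcases mul_eq_zero.mp h5 with h' | h'
      · exact absurd h' hy
      · linarith
    have key : 8*x^3 + 8*a*x^2 + 2*b*x + 2*a^2*x + a*b - c = 0 := by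
      linear_combination -hre - (3*x+a)*hy2
    nlinarith [mul_nonneg (mul_nonneg hx hx) hx, mul_nonneg (mul_nonneg ha.le hx) hx,
      mul_nonneg hb.le hx, mul_nonneg (mul_nonneg ha.le ha.le) hx]

/-- Stability of the endemic equilibrium: if R₀ > 1 then every complex eigenvalue
of M has strictly negative real part. -/
theorem stmt_9 (β γ δ σ ω α n : ℝ)
    (hβ : 0 < β) (hγ : 0 < γ) (hσ : 0 < σ) (hω : 0 < ω) (hn : 0 < n)
    (hδ : 0 ≤ δ) (hα0 : 0 ≤ α) (hα1 : α ≤ 1)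
    (hR0 : 1 < R0 β γ δ σ α) :
    ∀ μ ∈ spectrum ℂ ((Mjac β γ δ σ ω α).map (Complex.ofReal ·)), μ.re < 0 := by

  intro μ hμ
  have hS : 0 < δ + σ := by linarith
  have hA : 0 < α * γ + σ := by nlinarith
  set p := γ * (δ + σ) / (α * γ + σ) with hp_def
  set t := σ * (δ + σ) / (α * γ + σ) with ht_def
  set u := α * γ * (δ + σ) / (α * γ + σ) with hu_def
  set e := eps β γ δ σ ω α * ω * (δ + σ) with he_def
  -- basic positivity
  have hγS : 0 < γ * (δ + σ) := mul_pos hγ hS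
  have hN : γ * (δ + σ) < β * (α * γ + σ) := by
    unfold R0 at hR0
    rw [lt_div_iff₀ hγS] at hR0
    linarith
  have hD : 0 < σ * ω + γ * (δ + σ + ω) := by
    have h1 := mul_pos hσ hω
    have h2 := mul_pos hγ (show (0:ℝ) < δ + σ + ω by linarith)
    linarith
  have heps : 0 < eps β γ δ σ ω α := by
    unfold eps
    exact div_pos (by linarith) (mul_pos hS hD)
  have he : 0 < e := by rw [he_def]; exact mul_pos (mul_pos heps hω) hS
  have ht : 0 < t := by rw [ht_def]; exact div_pos (mul_pos hσ hS) hA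
  have hp : 0 < p := by rw [hp_def]; exact div_pos hγS hA
  have hu : 0 ≤ u := by
    rw [hu_def]
    exact div_nonneg (mul_nonneg (mul_nonneg hα0 hγ.le) hS.le) hA.le
  have hgt : σ ≤ γ + t := by
    rw [ht_def, ← sub_nonneg]
    have hrw : γ + σ * (δ + σ) / (α * γ + σ) - σ
        = (α * γ * γ + γ * σ * (1 - α) + σ * δ) / (α * γ + σ) := by
      field_simp
      ring
    rw [hrw]
    apply div_nonneg _ hA.le
    nlinarith [mul_nonneg (mul_nonneg hα0 hγ.le) hγ.le,
      mul_nonneg (mul_nonneg hγ.le hσ.le) (sub_nonneg.mpr hα1), mul_nonneg hσ.le hδ]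
  have hpt : σ * p = γ * t := by rw [hp_def, ht_def]; ring
  -- rewrite the matrix
  have hM : Mjac β γ δ σ ω α = !![-e-ω, -u-ω, -p-ω; e, -t, p; 0, σ, -γ] := by
    unfold Mjac
    rw [show -(eps β γ δ σ ω α) * ω * (δ + σ) - ω = -e - ω by rw [he_def]; ring,
        show -(α * β) / R0 β γ δ σ α - ω = -u - ω by
          rw [hu_def]; unfold R0; field_simp,
        show -β / R0 β γ δ σ α - ω = -p - ω by
          rw [hp_def]; unfold R0; field_simp,
        show eps β γ δ σ ω α * ω * (δ + σ) = e from he_def.symm,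
        show -(β * σ) / (γ * R0 β γ δ σ α) = -t by
          rw [ht_def]; unfold R0; field_simp,
        show β / R0 β γ δ σ α = p by
          rw [hp_def]; unfold R0; field_simp]
  rw [hM] at hμ
  have hdet : (algebraMap ℂ (Matrix (Fin 3) (Fin 3) ℂ) μ
      - (!![-e-ω, -u-ω, -p-ω; e, -t, p; 0, σ, -γ]).map (Complex.ofReal ·)).det = 0 := by
    have h1 := spectrum.mem_iff.mp hμ
    by_contra hne
    exact h1 ((Matrix.isUnit_iff_isUnit_det _).mpr (isUnit_iff_ne_zero.mpr hne))
  rw [det_fin_three] at hdet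
  simp only [Matrix.sub_apply, Matrix.map_apply, Matrix.algebraMap_matrix_apply,
    Matrix.cons_val', Matrix.cons_val_zero, Matrix.cons_val_one, Matrix.head_cons,
    Matrix.empty_val', Matrix.cons_val_fin_one, Matrix.head_fin_const,
    Matrix.cons_val_two, Matrix.tail_cons, Matrix.of_apply] at hdet
  norm_num at hdet
  push_cast at hdet
  have h3 : μ^3 + ((e+ω+t+γ : ℝ):ℂ)*μ^2 + (((e+ω)*(t+γ)+e*(u+ω) : ℝ):ℂ)*μ
      + ((e*(γ*(u+ω)+σ*(p+ω)) : ℝ):ℂ) = 0 := by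
    have hptC : (σ:ℂ)*(p:ℂ) = (γ:ℂ)*(t:ℂ) := by exact_mod_cast hpt
    push_cast
    linear_combination hdet + (μ + (e:ℂ) + (ω:ℂ))*hptC
  -- Routh-Hurwitz conditions
  have hA0 : 0 < e+ω+t+γ := by linarith
  have hB0 : 0 < (e+ω)*(t+γ)+e*(u+ω) := by
    have h1 : 0 < (e+ω)*(t+γ) := mul_pos (by linarith) (by linarith)
    have h2 : 0 < e*(u+ω) := mul_pos he (by linarith)
    linarith
  have hC0 : 0 < e*(γ*(u+ω)+σ*(p+ω)) := by
    have h1 : 0 < γ*(u+ω) := mul_pos hγ (by linarith)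
    have h2 : 0 < σ*(p+ω) := mul_pos hσ (by linarith)
    exact mul_pos he (by linarith)
  have habc : e*(γ*(u+ω)+σ*(p+ω)) < (e+ω+t+γ)*((e+ω)*(t+γ)+e*(u+ω)) := by
    have hc_eq : e*(γ*(u+ω)+σ*(p+ω)) = e*(γ*u+γ*t+γ*ω+σ*ω) := by
      linear_combination e*hpt
    rw [hc_eq]
    have key : (e+ω+t+γ)*((e+ω)*(t+γ)+e*(u+ω)) - e*(γ*u+γ*t+γ*ω+σ*ω)
        = e*ω*(γ+t-σ) + (ω*(γ+t)^2 + ω^2*(γ+t)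
          + e*(γ^2+t*u+t*γ+t^2+ω*u+ω*γ+2*(ω*t)+ω^2) + e^2*(u+γ+t+ω)) := by ring
    have k1 : 0 ≤ e*ω*(γ+t-σ) := mul_nonneg (mul_nonneg he.le hω.le) (by linarith)
    have k2 : 0 < ω*(γ+t)^2 := mul_pos hω (pow_pos (by linarith) 2)
    have k3 : 0 < ω^2*(γ+t) := mul_pos (pow_pos hω 2) (by linarith)
    have k4 : 0 < e*(γ^2+t*u+t*γ+t^2+ω*u+ω*γ+2*(ω*t)+ω^2) := by
      have i1 := mul_nonneg ht.le hu
      have i2 := mul_nonneg hω.le hu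
      have i3 := mul_pos ht hγ
      have i4 := mul_pos hω hγ
      have i5 := mul_pos hω ht
      have i6 := pow_pos hγ 2
      have i7 := pow_pos ht 2
      have i8 := pow_pos hω 2
      exact mul_pos he (by linarith)
    have k5 : 0 < e^2*(u+γ+t+ω) := mul_pos (pow_pos he 2) (by linarith)
    linarith [key]
  exact cubic_neg_re (e+ω+t+γ) ((e+ω)*(t+γ)+e*(u+ω)) (e*(γ*(u+ω)+σ*(p+ω)))
    hA0 hB0 hC0 habc μ h3
end

section
/- The eigenvalues of the matrix N = !![−ω, −αβ−ω, −β−ω; 0, αβ−δ−σ, β; 0, σ, −γ] over ℝ are exactly λ₁ = −ω, λ₂ = (αβ−γ−δ−σ − √D)/2, and λ₃ = (αβ−γ−δ−σ + √D)/2, where D = (−αβ+γ+δ+σ)² − 4(−αβγ + δγ − βσ + γσ). Equivalently, the characteristic polynomial of N factors as (λ+ω)(λ−λ₂)(λ−λ₃). -/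
open Matrix Polynomial

/-- The Jacobian of the reduced SE(R)IRS vector field at the disease-free
equilibrium (n, 0, 0). -/
noncomputable def Njac (β γ δ σ ω α : ℝ) : Matrix (Fin 3) (Fin 3) ℝ :=
  !![-ω, -(α * β) - ω, -β - ω;
     0, α * β - δ - σ, β;
     0, σ, -γ]

/-- The eigenvalues of N are exactly λ₁ = −ω, λ₂ and λ₃: the characteristic
polynomial factors as (λ + ω)(λ − λ₂)(λ − λ₃). -/
theorem stmt_10 (β γ δ σ ω α n : ℝ)
    (hβ : 0 < β) (hγ : 0 < γ) (hσ : 0 < σ) (hω : 0 < ω) (hn : 0 < n)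
    (hδ : 0 ≤ δ) (hα0 : 0 ≤ α) (hα1 : α ≤ 1) :
    (Njac β γ δ σ ω α).charpoly =
      (X + C ω) *
      (X - C ((α * β - γ - δ - σ -
        Real.sqrt ((-(α * β) + γ + δ + σ) ^ 2
          - 4 * (-(α * β) * γ + δ * γ - β * σ + γ * σ))) / 2)) *
      (X - C ((α * β - γ - δ - σ +
        Real.sqrt ((-(α * β) + γ + δ + σ) ^ 2
          - 4 * (-(α * β) * γ + δ * γ - β * σ + γ * σ))) / 2)) := by
  set D : ℝ := (-(α * β) + γ + δ + σ) ^ 2 - 4 * (-(α * β) * γ + δ * γ - β * σ + γ * σ) with hDdef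
  have hD : 0 ≤ D := by
    have : D = (α * β - δ - σ + γ) ^ 2 + 4 * (β * σ) := by rw [hDdef]; ring
    rw [this]
    nlinarith [sq_nonneg (α * β - δ - σ + γ), mul_pos hβ hσ]
  have hs : Real.sqrt D ^ 2 = D := Real.sq_sqrt hD
  set t : ℝ := α * β - γ - δ - σ with htdef
  set d : ℝ := -(α * β) * γ + δ * γ - β * σ + γ * σ with hddef
  have huv : ((t - Real.sqrt D) / 2) * ((t + Real.sqrt D) / 2) = d := by
    have : ((t - Real.sqrt D) / 2) * ((t + Real.sqrt D) / 2)
        = (t ^ 2 - Real.sqrt D ^ 2) / 4 := by ring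
    rw [this, hs, hDdef, htdef, hddef]; ring
  have hsum : ((t - Real.sqrt D) / 2) + ((t + Real.sqrt D) / 2) = t := by ring
  have hquad : (X - C ((t - Real.sqrt D) / 2)) * (X - C ((t + Real.sqrt D) / 2))
      = X ^ 2 - C t * X + C d := by
    have h : (X - C ((t - Real.sqrt D) / 2)) * (X - C ((t + Real.sqrt D) / 2))
        = X ^ 2 - C (((t - Real.sqrt D) / 2) + ((t + Real.sqrt D) / 2)) * X
          + C (((t - Real.sqrt D) / 2) * ((t + Real.sqrt D) / 2)) := by
      rw [C_add, C_mul]; ring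
    rw [h, hsum, huv]
  rw [mul_assoc, hquad]
  rw [Matrix.charpoly, Matrix.det_fin_three]
  simp [charmatrix_apply, Njac, Matrix.one_apply, Fin.ext_iff, Matrix.vecHead, Matrix.vecTail, htdef, hddef,
    map_neg, map_sub, map_add, _root_.map_mul]
  ring
end

section
/- The discriminant identity (−αβ+γ+δ+σ)² − 4(−αβγ + δγ − βσ + γσ) = 4βσ + (αβ+γ−δ−σ)² holds, and hence this quantity is nonnegative (strictly positive since β, σ > 0); consequently all three eigenvalues of the matrix N = !![−ω, −αβ−ω, −β−ω; 0, αβ−δ−σ, β; 0, σ, −γ] are real. -/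
open Matrix Polynomial

lemma sq_real_im_zero (w : ℂ) (d : ℝ) (hd : 0 ≤ d) (hw : w ^ 2 = (d : ℂ)) : w.im = 0 := by
  have h1 : (w ^ 2).im = 0 := by rw [hw]; simp
  have h2 : (w ^ 2).re = d := by rw [hw]; simp
  simp only [pow_two, Complex.mul_im, Complex.mul_re] at h1 h2
  have h3 : w.re * w.im = 0 := by linarith
  rcases mul_eq_zero.1 h3 with h | h
  · nlinarith [sq_nonneg w.im]
  · exact h

/-- The discriminant identity and positivity; consequently all eigenvalues of N
(over ℂ) are real. -/
theorem stmt_11 (β γ δ σ ω α n : ℝ)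
    (hβ : 0 < β) (hγ : 0 < γ) (hσ : 0 < σ) (hω : 0 < ω) (hn : 0 < n)
    (hδ : 0 ≤ δ) (hα0 : 0 ≤ α) (hα1 : α ≤ 1) :
    (-(α * β) + γ + δ + σ) ^ 2 - 4 * (-(α * β) * γ + δ * γ - β * σ + γ * σ)
        = 4 * β * σ + (α * β + γ - δ - σ) ^ 2 ∧
    0 < 4 * β * σ + (α * β + γ - δ - σ) ^ 2 ∧
    ∀ μ ∈ spectrum ℂ ((Njac β γ δ σ ω α).map (Complex.ofReal ·)), μ.im = 0 := by
  refine ⟨by ring, by nlinarith [sq_nonneg (α * β + γ - δ - σ)], ?_⟩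
  intro μ hμ
  set M := (Njac β γ δ σ ω α).map (Complex.ofReal ·) with hM
  have hdet : (μ • (1 : Matrix (Fin 3) (Fin 3) ℂ) - M).det = 0 := by
    rw [spectrum.mem_iff] at hμ
    by_contra hd
    exact hμ ((Matrix.isUnit_iff_isUnit_det _).2 (isUnit_iff_ne_zero.2 (by
      simpa [Algebra.algebraMap_eq_smul_one] using hd)))
  rw [Matrix.det_fin_three] at hdet
  simp only [hM, Njac, Matrix.sub_apply, Matrix.smul_apply, Matrix.one_apply,
    Matrix.map_apply, Matrix.cons_val', Matrix.cons_val_zero, Matrix.cons_val_one,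
    Matrix.head_cons, Matrix.empty_val', Matrix.cons_val_fin_one, Matrix.head_fin_const,
    Matrix.cons_val_two, Matrix.tail_cons, Fin.isValue] at hdet
  norm_num [Matrix.vecHead, Matrix.vecTail, Fin.ext_iff] at hdet
  have hfac : (μ + (ω : ℂ)) *
      ((μ - ((α * β - δ - σ : ℝ) : ℂ)) * (μ + (γ : ℂ)) - (β : ℂ) * (σ : ℂ)) = 0 := by
    push_cast at hdet ⊢
    linear_combination hdet
  rcases mul_eq_zero.1 hfac with h | h
  · have : μ = -(ω : ℂ) := by linear_combination h
    simp [this]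
  · have hq : (μ + (((γ - (α * β - δ - σ)) / 2 : ℝ) : ℂ)) ^ 2
        = ((β * σ + ((α * β - δ - σ) + γ) ^ 2 / 4 : ℝ) : ℂ) := by
      push_cast at h ⊢
      linear_combination h
    have him := sq_real_im_zero _ _ (by nlinarith [sq_nonneg ((α * β - δ - σ) + γ)]) hq
    simpa using him
end

section
/- The eigenvalue λ₂ = (αβ−γ−δ−σ − √(4βσ + (αβ+γ−δ−σ)²))/2 of the matrix N satisfies λ₂ ≤ −γ; in particular λ₂ < 0. -/
open Matrix Polynomial

/-- The eigenvalue λ₂ of N satisfies λ₂ ≤ −γ < 0. -/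
theorem stmt_12 (β γ δ σ ω α n : ℝ)
    (hβ : 0 < β) (hγ : 0 < γ) (hσ : 0 < σ) (hω : 0 < ω) (hn : 0 < n)
    (hδ : 0 ≤ δ) (hα0 : 0 ≤ α) (hα1 : α ≤ 1) :
    (α * β - γ - δ - σ - Real.sqrt (4 * β * σ + (α * β + γ - δ - σ) ^ 2)) / 2 ≤ -γ ∧
    (α * β - γ - δ - σ - Real.sqrt (4 * β * σ + (α * β + γ - δ - σ) ^ 2)) / 2 < 0 := by
  have hx : α * β + γ - δ - σ ≤ Real.sqrt (4 * β * σ + (α * β + γ - δ - σ) ^ 2) := by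
    calc α * β + γ - δ - σ ≤ |α * β + γ - δ - σ| := le_abs_self _
    _ = Real.sqrt ((α * β + γ - δ - σ) ^ 2) := (Real.sqrt_sq_eq_abs _).symm
    _ ≤ Real.sqrt (4 * β * σ + (α * β + γ - δ - σ) ^ 2) := by
        apply Real.sqrt_le_sqrt; nlinarith
  constructor
  · linarith
  · linarith
end

section
/- Let λ₃ = (αβ−γ−δ−σ + √(4βσ + (αβ+γ−δ−σ)²))/2. Then λ₃ < 0 if and only if R₀ < 1, λ₃ = 0 if and only if R₀ = 1, and λ₃ > 0 if and only if R₀ > 1. -/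
/-- The sign of the largest eigenvalue λ₃ of N is determined by R₀. -/
theorem stmt_13 (β γ δ σ ω α n : ℝ)
    (hβ : 0 < β) (hγ : 0 < γ) (hσ : 0 < σ) (hω : 0 < ω) (hn : 0 < n)
    (hδ : 0 ≤ δ) (hα0 : 0 ≤ α) (hα1 : α ≤ 1) :
    ((α * β - γ - δ - σ + Real.sqrt (4 * β * σ + (α * β + γ - δ - σ) ^ 2)) / 2 < 0
        ↔ R0 β γ δ σ α < 1) ∧
    ((α * β - γ - δ - σ + Real.sqrt (4 * β * σ + (α * β + γ - δ - σ) ^ 2)) / 2 = 0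
        ↔ R0 β γ δ σ α = 1) ∧
    (0 < (α * β - γ - δ - σ + Real.sqrt (4 * β * σ + (α * β + γ - δ - σ) ^ 2)) / 2
        ↔ 1 < R0 β γ δ σ α) := by
  set E : ℝ := β * (α * γ + σ) - γ * (δ + σ) with hE
  set B : ℝ := γ + δ + σ - α * β with hB
  set s : ℝ := Real.sqrt (4 * β * σ + (α * β + γ - δ - σ) ^ 2) with hs
  have hden : 0 < γ * (δ + σ) := by positivity
  -- sign of λ₃ determined by E
  have h1 : E < 0 → (α * β - γ - δ - σ + s) / 2 < 0 := by
    intro h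
    have hαβ : α * β < δ + σ := by nlinarith
    have hBpos : 0 < B := by simp only [hB]; linarith
    have hlt : s < B := by
      rw [hs, Real.sqrt_lt' hBpos]
      nlinarith
    simp only [hB] at hlt
    linarith
  have h2 : E = 0 → (α * β - γ - δ - σ + s) / 2 = 0 := by
    intro h
    have hαβ : α * β < δ + σ := by nlinarith
    have hBpos : (0:ℝ) ≤ B := by simp only [hB]; linarith
    have harg : 4 * β * σ + (α * β + γ - δ - σ) ^ 2 = B ^ 2 := by
      simp only [hB]; nlinarith
    have : s = B := by rw [hs, harg, Real.sqrt_sq hBpos]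
    simp only [hB] at this
    linarith
  have h3 : 0 < E → 0 < (α * β - γ - δ - σ + s) / 2 := by
    intro h
    rcases le_or_gt B 0 with hb | hb
    · have hspos : 0 < s := by
        rw [hs]; apply Real.sqrt_pos.2; nlinarith
      simp only [hB] at hb
      linarith
    · have hlt : B < s := by
        rw [hs]
        rw [show B < Real.sqrt (4 * β * σ + (α * β + γ - δ - σ) ^ 2) ↔
            B ^ 2 < 4 * β * σ + (α * β + γ - δ - σ) ^ 2 from Real.lt_sqrt hb.le]
        nlinarith
      simp only [hB] at hlt
      linarith
  -- R0 comparisons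
  have hR1 : R0 β γ δ σ α < 1 ↔ E < 0 := by
    rw [R0, div_lt_one hden]; constructor <;> intro <;> [skip; skip] <;> simp only [hE] at * <;> linarith
  have hR2 : R0 β γ δ σ α = 1 ↔ E = 0 := by
    rw [R0, div_eq_one_iff_eq hden.ne']
    constructor <;> intro h <;> simp only [hE] at * <;> linarith
  have hR3 : 1 < R0 β γ δ σ α ↔ 0 < E := by
    rw [R0, one_lt_div hden]; constructor <;> intro h <;> simp only [hE] at * <;> linarith
  refine ⟨?_, ?_, ?_⟩
  · rw [hR1]
    constructor
    · intro h
      rcases lt_trichotomy E 0 with h' | h' | h'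
      · exact h'
      · exact absurd (h2 h') (by linarith)
      · exact absurd (h3 h') (by linarith)
    · exact h1
  · rw [hR2]
    constructor
    · intro h
      rcases lt_trichotomy E 0 with h' | h' | h'
      · exact absurd (h1 h') (by linarith)
      · exact h'
      · exact absurd (h3 h') (by linarith)
    · exact h2
  · rw [hR3]
    constructor
    · intro h
      rcases lt_trichotomy E 0 with h' | h' | h'
      · exact absurd (h1 h') (by linarith)
      · exact absurd (h2 h') (by linarith)
      · exact h'
    · exact h3
end

section
/- Lemma (stability of the disease-free equilibrium): every complex eigenvalue of the matrix N = !![−ω, −αβ−ω, −β−ω; 0, αβ−δ−σ, β; 0, σ, −γ] (viewed over ℂ) has strictly negative real part if and only if R₀ < 1. Moreover, if R₀ > 1 then N has an eigenvalue with strictly positive real part. -/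
open Matrix Polynomial

/-- Spectrum characterization: the eigenvalues of N are the roots of
(μ + ω)(μ² - Tμ + D) where T is the trace and D the determinant of the 2×2
infected block. -/
lemma spec_iff (β γ δ σ ω α : ℝ) (μ : ℂ) :
    μ ∈ spectrum ℂ ((Njac β γ δ σ ω α).map (Complex.ofReal ·)) ↔
    (μ + ω) * (μ^2 - (α*β - δ - σ - γ)*μ + (γ*(δ+σ) - β*(α*γ+σ))) = 0 := by
  rw [spectrum.mem_iff, Matrix.isUnit_iff_isUnit_det, isUnit_iff_ne_zero, not_not]
  have : ((algebraMap ℂ (Matrix (Fin 3) (Fin 3) ℂ) μ) - (Njac β γ δ σ ω α).map (Complex.ofReal ·)).det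
      = (μ + ω) * (μ^2 - (α*β - δ - σ - γ)*μ + (γ*(δ+σ) - β*(α*γ+σ))) := by
    simp [Njac, Matrix.det_fin_three, Matrix.algebraMap_eq_diagonal, Matrix.diagonal,
      Matrix.map_apply, Matrix.vecHead, Matrix.vecTail]
    ring
  rw [this]

/-- If D ≤ 0 the quadratic x² - Tx + D has a nonnegative real root,
positive when D < 0. -/
lemma quad_root (T D : ℝ) (hDle : D ≤ 0) :
    ∃ x : ℝ, 0 ≤ x ∧ (D < 0 → 0 < x) ∧ x^2 - T*x + D = 0 := by
  have hdisc : 0 ≤ T^2 - 4*D := by nlinarith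
  set s := Real.sqrt (T^2 - 4*D) with hs
  have hs2 : s^2 = T^2 - 4*D := Real.sq_sqrt hdisc
  have hsnn : 0 ≤ s := Real.sqrt_nonneg _
  have hsT : |T| ≤ s := by
    rw [← Real.sqrt_sq_eq_abs]; exact Real.sqrt_le_sqrt (by linarith)
  refine ⟨(T + s)/2, by cases abs_cases T <;> linarith, ?_, by linear_combination hs2/4⟩
  intro hDlt
  have habs : |T| < s := by nlinarith [abs_nonneg T, sq_abs T]
  cases abs_cases T <;> linarith

/-- If T < 0 and D > 0, every complex root of μ² - Tμ + D has negative real part. -/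
lemma quad_neg (T D : ℝ) (hT : T < 0) (hD : 0 < D) (μ : ℂ)
    (h : μ^2 - (T:ℂ)*μ + (D:ℂ) = 0) : μ.re < 0 := by
  have hre : μ.re^2 - μ.im^2 - T*μ.re + D = 0 := by
    have := congrArg Complex.re h
    simp [Complex.add_re, Complex.sub_re, Complex.mul_re, pow_two] at this
    nlinarith [this]
  have him : μ.im*(2*μ.re - T) = 0 := by
    have := congrArg Complex.im h
    simp [Complex.add_im, Complex.sub_im, Complex.mul_im, pow_two] at this
    nlinarith [this]
  by_contra hage
  push_neg at hage
  rcases mul_eq_zero.mp him with h' | h'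
  · rw [h'] at hre; nlinarith
  · nlinarith

/-- Stability of the disease-free equilibrium: all complex eigenvalues of N have
negative real part iff R₀ < 1; if R₀ > 1 then N has an eigenvalue with positive
real part. -/
theorem stmt_14 (β γ δ σ ω α n : ℝ)
    (hβ : 0 < β) (hγ : 0 < γ) (hσ : 0 < σ) (hω : 0 < ω) (hn : 0 < n)
    (hδ : 0 ≤ δ) (hα0 : 0 ≤ α) (hα1 : α ≤ 1) :
    ((∀ μ ∈ spectrum ℂ ((Njac β γ δ σ ω α).map (Complex.ofReal ·)), μ.re < 0)
        ↔ R0 β γ δ σ α < 1) ∧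
    (1 < R0 β γ δ σ α →
      ∃ μ ∈ spectrum ℂ ((Njac β γ δ σ ω α).map (Complex.ofReal ·)), 0 < μ.re) := by
  have hden : 0 < γ*(δ+σ) := by positivity
  have hR0lt : R0 β γ δ σ α < 1 ↔ 0 < γ*(δ+σ) - β*(α*γ+σ) := by
    rw [R0, div_lt_one hden]; constructor <;> intro h <;> linarith
  have hR0gt : 1 < R0 β γ δ σ α ↔ γ*(δ+σ) - β*(α*γ+σ) < 0 := by
    rw [R0, lt_div_iff₀ hden]; constructor <;> intro h <;> linarith
  constructor
  · rw [hR0lt]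
    constructor
    · intro hall
      by_contra hDle
      push_neg at hDle
      obtain ⟨x, hx0, _, hxe⟩ := quad_root (α*β - δ - σ - γ) (γ*(δ+σ) - β*(α*γ+σ)) hDle
      have hmem : (x:ℂ) ∈ spectrum ℂ ((Njac β γ δ σ ω α).map (Complex.ofReal ·)) := by
        rw [spec_iff]
        have : (x:ℂ)^2 - ((α:ℂ)*β - δ - σ - γ)*x + ((γ:ℂ)*(δ+σ) - β*(α*γ+σ)) = 0 := by
          exact_mod_cast congrArg (Complex.ofReal ·) hxe
        rw [this, mul_zero]
      have := hall _ hmem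
      simp at this; linarith
    · intro hDpos μ hμ
      have hTneg : α*β - δ - σ - γ < 0 := by nlinarith
      rw [spec_iff] at hμ
      rcases mul_eq_zero.mp hμ with h | h
      · have : μ = -(ω:ℂ) := by linear_combination h
        rw [this]; simp [hω]
      · refine quad_neg (α*β - δ - σ - γ) (γ*(δ+σ) - β*(α*γ+σ)) hTneg hDpos μ ?_
        push_cast
        linear_combination h
  · intro hgt
    have hDlt := hR0gt.mp hgt
    obtain ⟨x, _, hxpos, hxe⟩ := quad_root (α*β - δ - σ - γ) (γ*(δ+σ) - β*(α*γ+σ)) hDlt.le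
    refine ⟨(x:ℂ), ?_, by simpa using hxpos hDlt⟩
    rw [spec_iff]
    have : (x:ℂ)^2 - ((α:ℂ)*β - δ - σ - γ)*x + ((γ:ℂ)*(δ+σ) - β*(α*γ+σ)) = 0 := by
      exact_mod_cast congrArg (Complex.ofReal ·) hxe
    rw [this, mul_zero]
end

section
/- The matrix N = !![−ω, −αβ−ω, −β−ω; 0, αβ−δ−σ, β; 0, σ, −γ] is singular (det N = 0) if and only if R₀ = 1. -/
open Matrix Polynomial

/-- N is singular if and only if R₀ = 1. -/
theorem stmt_15 (β γ δ σ ω α n : ℝ)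
    (hβ : 0 < β) (hγ : 0 < γ) (hσ : 0 < σ) (hω : 0 < ω) (hn : 0 < n)
    (hδ : 0 ≤ δ) (hα0 : 0 ≤ α) (hα1 : α ≤ 1) :
    (Njac β γ δ σ ω α).det = 0 ↔ R0 β γ δ σ α = 1 := by
  have hd : 0 < γ * (δ + σ) := by positivity
  rw [Njac, R0, det_fin_three, div_eq_one_iff_eq hd.ne']
  simp only [Matrix.cons_val_zero, Matrix.cons_val_one, Matrix.head_cons, Matrix.of_apply, Matrix.cons_val_two, Matrix.tail_cons]
  constructor <;> intro h <;> nlinarith [hω.ne', sq_nonneg ω]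
end

section
/- The eigenvalues of the 4×4 matrix Nᵛ = !![−φ−ω, αβψ/(φ+ψ) − ω, −βψ/(φ+ψ) − ω, ψ−ω; 0, −δ−σ + αβ(ψ+ρφ)/(φ+ψ), β(ψ+ρφ)/(φ+ψ), 0; 0, σ, −γ, 0; φ, −αβρφ/(φ+ψ), −βρφ/(φ+ψ), −ψ] over ℝ are exactly λ₁ = −ω, λ₂ = −φ−ψ, λ₃ = (αβ(ψ+ρφ) − (φ+ψ)(γ+δ+σ) − √Z)/(2(φ+ψ)), and λ₄ = (αβ(ψ+ρφ) − (φ+ψ)(γ+δ+σ) + √Z)/(2(φ+ψ)), where Z = 4βσ(φ+ψ)(ψ+ρφ) + (αβ(ψ+ρφ) + (γ−σ−δ)(φ+ψ))². Since Z > 0, all four eigenvalues are real. -/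
open Matrix Polynomial

/-- The Jacobian of the reduced SVE(R)IRS vector field at the disease-free
equilibrium p₁. -/
noncomputable def NjacV (β γ δ σ ω α φ ψ ρ : ℝ) : Matrix (Fin 4) (Fin 4) ℝ :=
  !![-φ - ω, α * β * ψ / (φ + ψ) - ω, -(β * ψ) / (φ + ψ) - ω, ψ - ω;
     0, -δ - σ + α * β * (ψ + ρ * φ) / (φ + ψ), β * (ψ + ρ * φ) / (φ + ψ), 0;
     0, σ, -γ, 0;
     φ, -(α * β * ρ * φ) / (φ + ψ), -(β * ρ * φ) / (φ + ψ), -ψ]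

/-- The quantity Z appearing in the eigenvalues of Nᵛ. -/
noncomputable def Zval (β γ δ σ α φ ψ ρ : ℝ) : ℝ :=
  4 * β * σ * (φ + ψ) * (ψ + ρ * φ) + (α * β * (ψ + ρ * φ) + (γ - σ - δ) * (φ + ψ)) ^ 2

lemma my_det_fin_four {R : Type*} [CommRing R] (A : Matrix (Fin 4) (Fin 4) R) :
    A.det =
      A 0 0 * (A 1 1 * (A 2 2 * A 3 3 - A 2 3 * A 3 2) - A 1 2 * (A 2 1 * A 3 3 - A 2 3 * A 3 1)
        + A 1 3 * (A 2 1 * A 3 2 - A 2 2 * A 3 1))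
      - A 0 1 * (A 1 0 * (A 2 2 * A 3 3 - A 2 3 * A 3 2) - A 1 2 * (A 2 0 * A 3 3 - A 2 3 * A 3 0)
        + A 1 3 * (A 2 0 * A 3 2 - A 2 2 * A 3 0))
      + A 0 2 * (A 1 0 * (A 2 1 * A 3 3 - A 2 3 * A 3 1) - A 1 1 * (A 2 0 * A 3 3 - A 2 3 * A 3 0)
        + A 1 3 * (A 2 0 * A 3 1 - A 2 1 * A 3 0))
      - A 0 3 * (A 1 0 * (A 2 1 * A 3 2 - A 2 2 * A 3 1) - A 1 1 * (A 2 0 * A 3 2 - A 2 2 * A 3 0)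
        + A 1 2 * (A 2 0 * A 3 1 - A 2 1 * A 3 0)) := by
  rw [Matrix.det_succ_row_zero]
  have h3 : (Fin.succ 2 : Fin 4) = 3 := rfl
  have h2 : (Fin.castSucc 2 : Fin 4) = 2 := rfl
  simp [Fin.sum_univ_succ, Matrix.det_fin_three, Fin.succAbove, h3, h2]
  ring

lemma my_eval_charpoly {R : Type*} [CommRing R] {n : Type*} [DecidableEq n] [Fintype n]
    (M : Matrix n n R) (x : R) :
    M.charpoly.eval x = (Matrix.diagonal (fun _ => x) - M).det := by
  rw [Matrix.charpoly, ← Polynomial.coe_evalRingHom, RingHom.map_det]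
  congr 1
  ext i j
  by_cases h : i = j
  · subst h
    simp [Matrix.charmatrix_apply_eq]
  · simp [Matrix.charmatrix_apply_ne _ _ _ h, Matrix.diagonal_apply_ne _ h]

set_option maxHeartbeats 1000000 in
/-- The eigenvalues of Nᵛ are exactly λ₁ = −ω, λ₂ = −φ−ψ, λ₃ and λ₄: the
characteristic polynomial factors accordingly; moreover Z > 0, so all four
eigenvalues are real. -/
theorem stmt_18 (β γ δ σ ω α n φ ψ ρ : ℝ)
    (hβ : 0 < β) (hγ : 0 < γ) (hσ : 0 < σ) (hω : 0 < ω) (hn : 0 < n)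
    (hφ : 0 < φ) (hψ : 0 < ψ) (hδ : 0 ≤ δ) (hα0 : 0 ≤ α) (hα1 : α ≤ 1)
    (hρ0 : 0 ≤ ρ) (hρ1 : ρ ≤ 1) :
    (NjacV β γ δ σ ω α φ ψ ρ).charpoly =
      (X - C (-ω)) * (X - C (-φ - ψ)) *
      (X - C ((α * β * (ψ + ρ * φ) - (φ + ψ) * (γ + δ + σ)
          - Real.sqrt (Zval β γ δ σ α φ ψ ρ)) / (2 * (φ + ψ)))) *
      (X - C ((α * β * (ψ + ρ * φ) - (φ + ψ) * (γ + δ + σ)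
          + Real.sqrt (Zval β γ δ σ α φ ψ ρ)) / (2 * (φ + ψ)))) ∧
    0 < Zval β γ δ σ α φ ψ ρ ∧
    ∀ μ ∈ spectrum ℂ ((NjacV β γ δ σ ω α φ ψ ρ).map (Complex.ofReal ·)), μ.im = 0 := by
  have hk : (0:ℝ) < φ + ψ := by linarith
  have hZ : (0:ℝ) < Zval β γ δ σ α φ ψ ρ := by
    unfold Zval
    have : 0 < ψ + ρ * φ := by positivity
    positivity
  have hs : Real.sqrt (Zval β γ δ σ α φ ψ ρ) * Real.sqrt (Zval β γ δ σ α φ ψ ρ)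
      = Zval β γ δ σ α φ ψ ρ := Real.mul_self_sqrt hZ.le
  have h1 : (NjacV β γ δ σ ω α φ ψ ρ).charpoly =
      (X - C (-ω)) * (X - C (-φ - ψ)) *
      (X - C ((α * β * (ψ + ρ * φ) - (φ + ψ) * (γ + δ + σ)
          - Real.sqrt (Zval β γ δ σ α φ ψ ρ)) / (2 * (φ + ψ)))) *
      (X - C ((α * β * (ψ + ρ * φ) - (φ + ψ) * (γ + δ + σ)
          + Real.sqrt (Zval β γ δ σ α φ ψ ρ)) / (2 * (φ + ψ)))) := by
    apply Polynomial.funext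
    intro x
    rw [my_eval_charpoly, my_det_fin_four]
    simp only [NjacV, Matrix.sub_apply, Matrix.diagonal_apply, Matrix.cons_val',
      Matrix.cons_val_zero, Matrix.cons_val_one, Matrix.head_cons, Matrix.empty_val',
      Matrix.cons_val_fin_one, Matrix.head_fin_const, Matrix.of_apply, Matrix.cons_val_two,
      Matrix.cons_val_three, Matrix.tail_cons, eval_mul, eval_sub, eval_X, eval_C]
    norm_num [Fin.ext_iff, show ((3 : Fin 4) : ℕ) = 3 from rfl]
    set s := Real.sqrt (Zval β γ δ σ α φ ψ ρ) with hsdef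
    have key : (x - (α * β * (ψ + ρ * φ) - (φ + ψ) * (γ + δ + σ) - s) / (2 * (φ + ψ))) *
        (x - (α * β * (ψ + ρ * φ) - (φ + ψ) * (γ + δ + σ) + s) / (2 * (φ + ψ))) =
        x ^ 2 - (α * β * (ψ + ρ * φ) - (φ + ψ) * (γ + δ + σ)) / (φ + ψ) * x +
        ((α * β * (ψ + ρ * φ) - (φ + ψ) * (γ + δ + σ)) ^ 2 - s * s) / (4 * (φ + ψ) ^ 2) := by
      field_simp
      ring
    conv_rhs => rw [mul_assoc, key]
    rw [hs]
    unfold Zval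
    field_simp
    ring
  refine ⟨h1, hZ, ?_⟩
  intro μ hμ
  set M' := (NjacV β γ δ σ ω α φ ψ ρ).map (Complex.ofReal ·) with hM'
  have hcp : M'.charpoly = (NjacV β γ δ σ ω α φ ψ ρ).charpoly.map Complex.ofRealHom := by
    rw [hM', ← Matrix.charpoly_map]
    rfl
  have hdet0 : M'.charpoly.eval μ = 0 := by
    rw [my_eval_charpoly]
    have hnu : ¬ IsUnit (algebraMap ℂ (Matrix (Fin 4) (Fin 4) ℂ) μ - M') := hμ
    rw [Matrix.isUnit_iff_isUnit_det, isUnit_iff_ne_zero, not_not] at hnu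
    have halg : (algebraMap ℂ (Matrix (Fin 4) (Fin 4) ℂ)) μ = Matrix.diagonal (fun _ => μ) := by
      ext i j
      by_cases h : i = j
      · subst h
        simp [Matrix.algebraMap_matrix_apply]
      · simp [Matrix.algebraMap_matrix_apply, h, Matrix.diagonal_apply_ne _ h]
    rw [← halg]
    exact hnu
  rw [hcp, h1] at hdet0
  simp only [Polynomial.map_mul, Polynomial.map_sub, Polynomial.map_X, Polynomial.map_C,
    eval_mul, eval_sub, eval_X, eval_C, mul_eq_zero, sub_eq_zero] at hdet0
  have him : ∀ r : ℝ, μ = Complex.ofRealHom r → μ.im = 0 := by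
    intro r hr
    rw [hr, Complex.ofRealHom_eq_coe, Complex.ofReal_im]
  rcases hdet0 with ((h | h) | h) | h
  · exact him _ h
  · exact him _ h
  · exact him _ h
  · exact him _ h
end

section
/- Proposition (stability of the SVE(R)IRS disease-free equilibrium): det Nᵛ > 0 if and only if R₀ᵛ < 1, the eigenvalues λ₁ = −ω, λ₂ = −φ−ψ, and λ₃ = (αβ(ψ+ρφ) − (φ+ψ)(γ+δ+σ) − √Z)/(2(φ+ψ)) of Nᵛ satisfy λ₁ < 0, λ₂ < 0, and λ₃ ≤ −γ < 0, and consequently every complex eigenvalue of Nᵛ has strictly negative real part if and only if R₀ᵛ < 1. -/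
open Matrix Polynomial

/-- The SVE(R)IRS basic reproductive number. -/
noncomputable def R0v (β γ δ σ α φ ψ ρ : ℝ) : ℝ :=
  (β / γ) * ((α * γ + σ) / (σ + δ)) * ((ψ + ρ * φ) / (ψ + φ))

set_option maxHeartbeats 1000000 in
lemma aux_det4 {R : Type*} [CommRing R] (a b c d e f g h i j k l m n o p : R) :
    (!![a,b,c,d; e,f,g,h; i,j,k,l; m,n,o,p]).det =
      a*(f*(k*p - l*o) - g*(j*p - l*n) + h*(j*o - k*n))
      - b*(e*(k*p - l*o) - g*(i*p - l*m) + h*(i*o - k*m))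
      + c*(e*(j*p - l*n) - f*(i*p - l*m) + h*(i*n - j*m))
      - d*(e*(j*o - k*n) - f*(i*o - k*m) + g*(i*n - j*m)) := by
  simp [Matrix.det_succ_row_zero, Fin.sum_univ_succ, Matrix.det_fin_three,
    Fin.succAbove]
  ring

/-- Generic form of the Jacobian. -/
def Ngen {R : Type*} [CommRing R] (γ δ σ ω φ ψ u v y z : R) : Matrix (Fin 4) (Fin 4) R :=
  !![-φ - ω, (u - y) - ω, -(v - z) - ω, ψ - ω;
     0, -δ - σ + u, v, 0;
     0, σ, -γ, 0;
     φ, -y, -z, -ψ]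

set_option maxHeartbeats 1000000 in
lemma NjacV_eq (β γ δ σ ω α φ ψ ρ : ℝ) (hP : φ + ψ ≠ 0) :
    NjacV β γ δ σ ω α φ ψ ρ = Ngen γ δ σ ω φ ψ
      (α * β * (ψ + ρ * φ) / (φ + ψ)) (β * (ψ + ρ * φ) / (φ + ψ))
      (α * β * ρ * φ / (φ + ψ)) (β * ρ * φ / (φ + ψ)) := by
  ext i j
  fin_cases i <;> fin_cases j <;> simp [NjacV, Ngen] <;> field_simp <;> ring

set_option maxHeartbeats 1000000 in
lemma Ngen_map (γ δ σ ω φ ψ u v y z : ℝ) :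
    (Ngen γ δ σ ω φ ψ u v y z).map (Complex.ofReal ·)
      = Ngen (γ:ℂ) (δ:ℂ) (σ:ℂ) (ω:ℂ) (φ:ℂ) (ψ:ℂ) (u:ℂ) (v:ℂ) (y:ℂ) (z:ℂ) := by
  ext i j
  fin_cases i <;> fin_cases j <;> simp [Ngen] <;> push_cast <;> ring

set_option maxHeartbeats 1000000 in
lemma Ngen_charfac (γ δ σ ω φ ψ u v y z μ : ℂ) :
    (μ • (1 : Matrix (Fin 4) (Fin 4) ℂ) - Ngen γ δ σ ω φ ψ u v y z).det
      = (μ + ω) * (μ + (φ + ψ))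
          * (μ^2 + (γ + δ + σ - u) * μ + (γ * (σ + δ) - (u * γ + v * σ))) := by
  have h : μ • (1 : Matrix (Fin 4) (Fin 4) ℂ) - Ngen γ δ σ ω φ ψ u v y z
      = !![μ + φ + ω, -(u - y) + ω, (v - z) + ω, -ψ + ω;
           0, μ + δ + σ - u, -v, 0;
           0, -σ, μ + γ, 0;
           -φ, y, z, μ + ψ] := by
    ext i j
    fin_cases i <;> fin_cases j <;> simp [Ngen, Matrix.one_apply] <;> ring
  rw [h, aux_det4]; ring

set_option maxHeartbeats 1000000 in
lemma Ngen_det (γ δ σ ω φ ψ u v y z : ℝ) :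
    (Ngen γ δ σ ω φ ψ u v y z).det
      = ω * (φ + ψ) * (γ * (σ + δ) - (u * γ + v * σ)) := by
  rw [show Ngen γ δ σ ω φ ψ u v y z = !![-φ - ω, (u - y) - ω, -(v - z) - ω, ψ - ω;
     0, -δ - σ + u, v, 0; 0, σ, -γ, 0; φ, -y, -z, -ψ] from rfl, aux_det4]
  ring

lemma mem_spec_iff (M : Matrix (Fin 4) (Fin 4) ℂ) (μ : ℂ) :
    μ ∈ spectrum ℂ M ↔ (μ • (1 : Matrix (Fin 4) (Fin 4) ℂ) - M).det = 0 := by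
  rw [spectrum.mem_iff, Matrix.isUnit_iff_isUnit_det, isUnit_iff_ne_zero, not_ne_iff,
    Algebra.algebraMap_eq_smul_one]

lemma specfac (β γ δ σ ω α φ ψ ρ : ℝ) (hP : φ + ψ ≠ 0) (μ : ℂ) :
    μ ∈ spectrum ℂ ((NjacV β γ δ σ ω α φ ψ ρ).map (Complex.ofReal ·)) ↔
      (μ + ω) * (μ + ((φ:ℂ) + ψ))
        * (μ^2 + ((γ + δ + σ - α * β * (ψ + ρ * φ) / (φ + ψ) : ℝ) : ℂ) * μ
            + ((γ * (σ + δ) - β * (ψ + ρ * φ) * (α * γ + σ) / (φ + ψ) : ℝ) : ℂ)) = 0 := by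
  rw [mem_spec_iff, NjacV_eq β γ δ σ ω α φ ψ ρ hP, Ngen_map, Ngen_charfac]
  have h1 : ((γ + δ + σ - α * β * (ψ + ρ * φ) / (φ + ψ) : ℝ) : ℂ)
      = (γ:ℂ) + δ + σ - (α * β * (ψ + ρ * φ) / (φ + ψ) : ℝ) := by push_cast; ring
  have h2 : ((γ * (σ + δ) - β * (ψ + ρ * φ) * (α * γ + σ) / (φ + ψ) : ℝ) : ℂ)
      = (γ:ℂ) * (σ + δ) - (((α * β * (ψ + ρ * φ) / (φ + ψ) : ℝ) : ℂ) * γ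
          + ((β * (ψ + ρ * φ) / (φ + ψ) : ℝ) : ℂ) * σ) := by
    push_cast
    field_simp
  rw [h1, h2]

set_option maxHeartbeats 1000000 in
/-- Stability of the SVE(R)IRS disease-free equilibrium: det Nᵛ > 0 iff R₀ᵛ < 1;
the eigenvalues λ₁, λ₂, λ₃ are negative (with λ₃ ≤ −γ < 0); and all complex
eigenvalues of Nᵛ have negative real part iff R₀ᵛ < 1. -/
theorem stmt_19 (β γ δ σ ω α n φ ψ ρ : ℝ)
    (hβ : 0 < β) (hγ : 0 < γ) (hσ : 0 < σ) (hω : 0 < ω) (hn : 0 < n)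
    (hφ : 0 < φ) (hψ : 0 < ψ) (hδ : 0 ≤ δ) (hα0 : 0 ≤ α) (hα1 : α ≤ 1)
    (hρ0 : 0 ≤ ρ) (hρ1 : ρ ≤ 1) :
    (0 < (NjacV β γ δ σ ω α φ ψ ρ).det ↔ R0v β γ δ σ α φ ψ ρ < 1) ∧
    (-ω < 0) ∧ (-φ - ψ < 0) ∧
    ((α * β * (ψ + ρ * φ) - (φ + ψ) * (γ + δ + σ)
        - Real.sqrt (Zval β γ δ σ α φ ψ ρ)) / (2 * (φ + ψ)) ≤ -γ) ∧ (-γ < 0) ∧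
    ((∀ μ ∈ spectrum ℂ ((NjacV β γ δ σ ω α φ ψ ρ).map (Complex.ofReal ·)), μ.re < 0)
        ↔ R0v β γ δ σ α φ ψ ρ < 1) := by
  have hP : (0:ℝ) < φ + ψ := by linarith
  have hP' : φ + ψ ≠ 0 := ne_of_gt hP
  have hρφ : 0 ≤ ρ * φ := mul_nonneg hρ0 hφ.le
  have hW : (0:ℝ) < ψ + ρ * φ := by linarith
  have hσδ : (0:ℝ) < σ + δ := by linarith
  obtain ⟨b, hbdef⟩ : ∃ b : ℝ, b = γ + δ + σ - α * β * (ψ + ρ * φ) / (φ + ψ) := ⟨_, rfl⟩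
  obtain ⟨c, hcdef⟩ : ∃ c : ℝ, c = γ * (σ + δ) - β * (ψ + ρ * φ) * (α * γ + σ) / (φ + ψ) := ⟨_, rfl⟩
  -- Z and sqrt facts
  have hZ0 : 0 ≤ Zval β γ δ σ α φ ψ ρ := by
    rw [Zval]; positivity
  obtain ⟨s, hsdef⟩ : ∃ s : ℝ, s = Real.sqrt (Zval β γ δ σ α φ ψ ρ) := ⟨_, rfl⟩
  have hs0 : 0 ≤ s := hsdef ▸ Real.sqrt_nonneg _
  have hs2 : s ^ 2 = Zval β γ δ σ α φ ψ ρ := hsdef ▸ Real.sq_sqrt hZ0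
  have hZb : Zval β γ δ σ α φ ψ ρ = ((φ+ψ)*b)^2 - 4*((φ+ψ)^2*c) := by
    rw [Zval, hbdef, hcdef]; field_simp; ring
  -- eigenvalues of the quadratic
  obtain ⟨lm, hlm⟩ : ∃ lm : ℝ, lm = (-b - s/(φ+ψ))/2 := ⟨_, rfl⟩
  obtain ⟨lp, hlp⟩ : ∃ lp : ℝ, lp = (-b + s/(φ+ψ))/2 := ⟨_, rfl⟩
  have hsum : lp + lm = -b := by rw [hlp, hlm]; ring
  have hprod : lp * lm = c := by
    rw [hlp, hlm]
    have hs2' : s^2 = ((φ+ψ)*b)^2 - 4*((φ+ψ)^2*c) := by rw [hs2, hZb]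
    field_simp
    nlinarith [hs2']
  -- λ₃ = lm
  have hl3 : (α * β * (ψ + ρ * φ) - (φ + ψ) * (γ + δ + σ) - s) / (2 * (φ + ψ)) = lm := by
    rw [hlm, hbdef]; field_simp; ring
  -- lm ≤ -γ
  have hlm_le : lm ≤ -γ := by
    have key : (φ+ψ) * (2*γ - b) ≤ s := by
      rcases le_or_gt (2*γ - b) 0 with h | h
      · nlinarith
      · rw [hsdef]
        apply Real.le_sqrt' (by positivity) |>.mpr
        -- need ((φ+ψ)*(2γ-b))^2 ≤ Zval
        rw [hZb]
        have hvσ : 0 ≤ β * (ψ + ρ * φ) / (φ + ψ) * σ := by positivity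
        have hqγ : γ^2 - γ*b + c = -(β * (ψ + ρ * φ) / (φ + ψ) * σ) := by
          rw [hbdef, hcdef]; field_simp; ring
        have key2 : ((φ+ψ)*b)^2 - 4*((φ+ψ)^2*c) - ((φ+ψ)*(2*γ-b))^2
            = 4*(φ+ψ)^2*(β * (ψ + ρ * φ) / (φ + ψ) * σ) := by
          linear_combination ((-4)*(φ+ψ)^2) * hqγ
        have hA : 0 ≤ 4*(φ+ψ)^2*(β * (ψ + ρ * φ) / (φ + ψ) * σ) := by positivity
        linarith [key2, hA]
    rw [hlm]
    rw [div_le_iff₀ (by norm_num : (0:ℝ) < 2)] at *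
    have h2 : s/(φ+ψ) ≥ 2*γ - b := by
      rw [ge_iff_le, le_div_iff₀ hP]; nlinarith [key]
    nlinarith [h2]
  have hlm_neg : lm < 0 := lt_of_le_of_lt hlm_le (by linarith)
  -- c > 0 ↔ lp < 0
  have hcp : 0 < c ↔ lp < 0 := by
    constructor
    · intro hc
      by_contra h
      push_neg at h
      nlinarith [hprod]
    · intro h
      nlinarith [hprod]
  -- R0 < 1 ↔ 0 < c
  have hR0 : R0v β γ δ σ α φ ψ ρ < 1 ↔ 0 < c := by
    rw [R0v, hcdef]
    rw [div_mul_div_comm, div_mul_div_comm, div_lt_one (by positivity)]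
    rw [sub_pos, div_lt_iff₀ hP]
    constructor <;> intro h <;> nlinarith [h]
  -- det
  have hdet : (NjacV β γ δ σ ω α φ ψ ρ).det = ω * (φ + ψ) * c := by
    rw [NjacV_eq β γ δ σ ω α φ ψ ρ hP', Ngen_det, hcdef]
    field_simp
  refine ⟨?_, by linarith, by linarith, by rw [← hsdef, hl3]; exact hlm_le, by linarith, ?_⟩
  · rw [hdet]
    constructor
    · intro h
      rw [hR0]
      have hwp := mul_pos hω hP
      nlinarith [h, hwp]
    · intro h
      rw [hR0] at h
      positivity
  · -- spectrum part
    have hquad : ∀ μ : ℂ, μ^2 + (b:ℂ)*μ + (c:ℂ) = (μ - lp) * (μ - lm) := by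
      intro μ
      have h1 : ((lp:ℂ) + lm) = -(b:ℂ) := by exact_mod_cast congrArg (Complex.ofReal ·) hsum
      have h2 : ((lp:ℂ) * lm) = (c:ℂ) := by exact_mod_cast congrArg (Complex.ofReal ·) hprod
      have : (b:ℂ) = -((lp:ℂ) + lm) := by rw [h1]; ring
      rw [this, ← h2]; ring
    constructor
    · intro hall
      rw [hR0, hcp]
      have hmem : (lp : ℂ) ∈ spectrum ℂ ((NjacV β γ δ σ ω α φ ψ ρ).map (Complex.ofReal ·)) := by
        rw [specfac β γ δ σ ω α φ ψ ρ hP']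
        rw [← hbdef, ← hcdef, hquad]
        simp
      have := hall _ hmem
      simpa using this
    · intro hR
      have hc : 0 < c := hR0.mp hR
      have hlp_neg : lp < 0 := hcp.mp hc
      intro μ hμ
      rw [specfac β γ δ σ ω α φ ψ ρ hP', ← hbdef, ← hcdef, hquad] at hμ
      rcases mul_eq_zero.mp hμ with h | h
      · rcases mul_eq_zero.mp h with h | h
        · have : μ = -(ω:ℂ) := by linear_combination h
          rw [this]; simpa using hω
        · have : μ = -((φ:ℂ) + ψ) := by linear_combination h
          rw [this]
          simp only [Complex.neg_re, Complex.add_re, Complex.ofReal_re]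
          linarith
      · rcases mul_eq_zero.mp h with h | h
        · have : μ = (lp:ℂ) := by linear_combination h
          rw [this]; simpa using hlp_neg
        · have : μ = (lm:ℂ) := by linear_combination h
          rw [this]; simpa using hlm_neg
end
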